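/- Let d ≥ 1, let f : ℝ^d → ℝ be continuously differentiable with L-Lipschitz-continuous gradient, let R be a full-dimensional hyperrectangle in ℝ^d, let x ∈ R, and let ε > 0. If every point y on the boundary ∂R of R is ε-unreachable from x (i.e., f(y) > f(x) − ε‖x−y‖₂), then R contains an ε-stationary point of f, i.e., there exists z ∈ R with ‖∇f(z)‖₂ ≤ ε. -/

import Mathlib

open Filter Topology Set

/-- If every point on the boundary of a full-dimensional
hyperrectangle `R` is `ε`-unreachable from `x ∈ R` (for a continuously
differentiable `f : ℝ^d → ℝ` with `L`-Lipschitz gradient), then `R` contains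
an `ε`-stationary point of `f`. -/
theorem boundary_unreachable_implies_stationary_point
    (d : ℕ) (hd : 1 ≤ d) (L : ℝ)
    (f : EuclideanSpace ℝ (Fin d) → ℝ)
    (hf : ContDiff ℝ 1 f)
    (hgrad : ∀ x y : EuclideanSpace ℝ (Fin d),
      ‖gradient f x - gradient f y‖ ≤ L * ‖x - y‖)
    (a b : Fin d → ℝ) (hab : ∀ i, a i < b i)
    (R : Set (EuclideanSpace ℝ (Fin d)))
    (hR : R = {y | ∀ i, a i ≤ y i ∧ y i ≤ b i})
    (x : EuclideanSpace ℝ (Fin d)) (hx : x ∈ R)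
    (ε : ℝ) (hε : 0 < ε)
    (hunreach : ∀ y ∈ frontier R, f y > f x - ε * ‖x - y‖) :
    ∃ z ∈ R, ‖gradient f z‖ ≤ ε := by
  have hfd : Differentiable ℝ f := hf.differentiable one_ne_zero
  -- R is compact
  have hRc : IsCompact R := by
    rw [hR]
    have hset : {y : EuclideanSpace ℝ (Fin d) | ∀ i, a i ≤ y i ∧ y i ≤ b i}
        = (EuclideanSpace.equiv (Fin d) ℝ) ⁻¹'
            (Set.univ.pi fun i => Set.Icc (a i) (b i)) := by
      ext y
      simp only [Set.mem_setOf_eq, Set.mem_preimage, Set.mem_univ_pi, Set.mem_Icc]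
      rfl
    rw [hset]
    exact ((EuclideanSpace.equiv (Fin d) ℝ).toHomeomorph.isCompact_preimage).mpr
      (isCompact_univ_pi fun i => isCompact_Icc)
  have hRclosed : IsClosed R := hRc.isClosed
  -- minimize g y = f y + ε * ‖y - x‖ over R
  set g : EuclideanSpace ℝ (Fin d) → ℝ := fun y => f y + ε * ‖y - x‖ with hgdef
  have hgc : ContinuousOn g R :=
    (hfd.continuous.add
      (continuous_const.mul ((continuous_id.sub continuous_const).norm))).continuousOn
  obtain ⟨z, hzR, hzmin⟩ := hRc.exists_isMinOn ⟨x, hx⟩ hgc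
  have hzx : f z + ε * ‖z - x‖ ≤ f x := by
    have := hzmin hx
    simpa [hgdef] using this
  -- z is in the interior of R
  have hzint : z ∈ interior R := by
    by_contra h
    have hfr : z ∈ frontier R := by
      rw [hRclosed.frontier_eq]; exact ⟨hzR, h⟩
    have h1 := hunreach z hfr
    have h2 : ‖x - z‖ = ‖z - x‖ := norm_sub_rev x z
    rw [h2] at h1
    linarith
  refine ⟨z, hzR, ?_⟩
  set G := gradient f z with hG
  -- key directional derivative inequality with v = -G
  set v : EuclideanSpace ℝ (Fin d) := -G with hv
  have hDf : HasFDerivAt f ((InnerProductSpace.toDual ℝ _) G) z :=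
    ((hfd z).hasGradientAt).hasFDerivAt
  have hderiv : HasDerivAt (fun t : ℝ => f (z + t • v)) (inner ℝ G v) 0 := by
    have hc : HasDerivAt (fun t : ℝ => z + t • v) v 0 := by
      simpa using ((hasDerivAt_id (0:ℝ)).smul_const v).const_add z
    have hDf' : HasFDerivAt f ((InnerProductSpace.toDual ℝ _) G) (z + (0:ℝ) • v) := by
      simpa using hDf
    have := hDf'.comp_hasDerivAt 0 hc
    simp only [InnerProductSpace.toDual_apply_apply] at this
    exact this
  obtain ⟨δ, hδ, hball⟩ := Metric.mem_nhds_iff.mp (mem_interior_iff_mem_nhds.mp hzint)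
  have hslope : ∀ t : ℝ, 0 < t → t * ‖v‖ < δ →
      -(ε * ‖v‖) ≤ (f (z + t • v) - f z) / t := by
    intro t ht htδ
    have hmem : z + t • v ∈ R := by
      apply hball
      simp only [Metric.mem_ball, dist_eq_norm]
      have : z + t • v - z = t • v := by abel
      rw [this, norm_smul]
      simpa [abs_of_pos ht] using htδ
    have hmin := hzmin hmem
    simp only [hgdef] at hmin
    have htri : ‖z + t • v - x‖ ≤ ‖z - x‖ + t * ‖v‖ := by
      have : z + t • v - x = (z - x) + t • v := by abel
      rw [this]
      calc ‖(z - x) + t • v‖ ≤ ‖z - x‖ + ‖t • v‖ := norm_add_le _ _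
        _ = ‖z - x‖ + t * ‖v‖ := by rw [norm_smul, Real.norm_eq_abs, abs_of_pos ht]
    have hmin' : f z + ε * ‖z - x‖ ≤ f (z + t • v) + ε * ‖z + t • v - x‖ := hmin
    have hge : f (z + t • v) - f z ≥ -(ε * ‖v‖) * t := by
      nlinarith [mul_le_mul_of_nonneg_left htri hε.le]
    rw [le_div_iff₀ ht]
    linarith [hge]
  -- take the limit along 𝓝[>] 0
  have hlim : Tendsto (slope (fun t : ℝ => f (z + t • v)) 0) (𝓝[>] (0:ℝ))
      (𝓝 (inner ℝ G v : ℝ)) :=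
    ((hasDerivAt_iff_tendsto_slope).mp hderiv).mono_left
      (nhdsWithin_mono _ fun t ht => ne_of_gt ht)
  have hev : ∀ᶠ t in 𝓝[>] (0:ℝ),
      -(ε * ‖v‖) ≤ slope (fun t : ℝ => f (z + t • v)) 0 t := by
    have hδ' : 0 < δ / (‖v‖ + 1) := div_pos hδ (by positivity)
    filter_upwards [Ioo_mem_nhdsGT_of_mem (Set.left_mem_Ico.mpr hδ')] with t ht
    have ht0 : 0 < t := ht.1
    have htv : t * ‖v‖ < δ := by
      have h1 : t * ‖v‖ ≤ t * (‖v‖ + 1) := by nlinarith [norm_nonneg v]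
      have hpos : (0:ℝ) < ‖v‖ + 1 := by positivity
      have h2 : t * (‖v‖ + 1) < δ := by
        calc t * (‖v‖ + 1) < (δ / (‖v‖ + 1)) * (‖v‖ + 1) :=
              mul_lt_mul_of_pos_right ht.2 hpos
          _ = δ := div_mul_cancel₀ δ (ne_of_gt hpos)
      linarith
    have := hslope t ht0 htv
    simpa [slope_def_field, div_eq_inv_mul, mul_comm] using this
  have hfinal : -(ε * ‖v‖) ≤ (inner ℝ G v : ℝ) :=
    ge_of_tendsto hlim hev
  -- conclude
  have hGv : (inner ℝ G v : ℝ) = -‖G‖ ^ 2 := by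
    rw [hv, inner_neg_right, real_inner_self_eq_norm_sq]
  have hnv : ‖v‖ = ‖G‖ := by simp [hv]
  rw [hGv, hnv] at hfinal
  nlinarith [norm_nonneg G, hfinal, hε]
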